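/- Let X be a locally path connected and semilocally simply connected topological space. Then X is second countable if and only if Π₁(X) with the CO' topology is second countable (and these are also equivalent to P(X) with the compact-open topology being second countable). -/

import Mathlib

open unitInterval

noncomputable section

variable {X : Type*} [TopologicalSpace X]

/-- The path-homotopy (homotopy relative to `{0,1}`) relation on `C(I, X)`. -/
def pRel (f g : C(I, X)) : Prop := f.HomotopicRel g {0, 1}

/-- The path-homotopy setoid on `C(I, X)`. -/
def pSetoid (X : Type*) [TopologicalSpace X] : Setoid C(I, X) :=
  ⟨pRel, ContinuousMap.HomotopicRel.equivalence⟩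

/-- The fundamental groupoid `Π₁(X)` as the quotient of the path space `P(X) = C(I, X)`
(with the compact-open topology) by path homotopy; it carries the quotient (CO') topology. -/
abbrev Pi1 (X : Type*) [TopologicalSpace X] := Quotient (pSetoid X)

/-- The quotient map `q : P(X) → Π₁(X)`. -/
def pq : C(I, X) → Pi1 X := Quotient.mk (pSetoid X)

theorem pRel.endpts {f g : C(I, X)} (h : pRel f g) {t : I} (ht : t ∈ ({0, 1} : Set I)) :
    f t = g t := h.some.fst_eq_snd ht

/-- The source map `s : Π₁(X) → X`, `[γ] ↦ γ(0)`. -/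
def srcMap : Pi1 X → X :=
  Quotient.lift (fun f : C(I, X) => f 0) fun _ _ h =>
    pRel.endpts h (by simp)

/-- The range map `r : Π₁(X) → X`, `[γ] ↦ γ(1)`. -/
def rngMap : Pi1 X → X :=
  Quotient.lift (fun f : C(I, X) => f 1) fun _ _ h =>
    pRel.endpts h (by simp)

/-- A continuous map `I → X` regarded as a `Path` between its endpoints. -/
def toPath (f : C(I, X)) : Path (f 0) (f 1) := ⟨f, rfl, rfl⟩

/-- Concatenation `α ⧠ β` of paths: traverse `β` first and then `α`
(given `β 1 = α 0`). -/
def concat (α β : C(I, X)) (h : β 1 = α 0) : C(I, X) :=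
  ((toPath β).trans ((toPath α).cast h rfl)).toContinuousMap

@[simp] theorem concat_zero (α β : C(I, X)) (h : β 1 = α 0) : concat α β h 0 = β 0 :=
  ((toPath β).trans ((toPath α).cast h rfl)).source

@[simp] theorem concat_one (α β : C(I, X)) (h : β 1 = α 0) : concat α β h 1 = α 1 :=
  ((toPath β).trans ((toPath α).cast h rfl)).target

/-- The set `N([γ], U, V) = {[δ ⧠ γ ⧠ θ] : δ a path in U with δ 0 = γ 1,
θ a path in V with θ 1 = γ 0}` in `Π₁(X)`. -/
def Nhd (a : Pi1 X) (U V : Set X) : Set (Pi1 X) :=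
  { b | ∃ (γ δ θ : C(I, X)) (h₁ : θ 1 = γ 0) (h₂ : γ 1 = δ 0),
      pq γ = a ∧ Set.range δ ⊆ U ∧ Set.range θ ⊆ V ∧
      b = pq (concat δ (concat γ θ h₁) ((concat_one γ θ h₁).trans h₂)) }

/-- A subset `U ⊆ X` is relatively inessential in `X` if every loop in `U` is
null-homotopic (path-homotopic to a constant path) in `X`. -/
def RelInessential (X : Type*) [TopologicalSpace X] (U : Set X) : Prop :=
  ∀ γ : C(I, X), Set.range γ ⊆ U → γ 1 = γ 0 →
    pRel γ (ContinuousMap.const I (γ 0))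

/-- `X` is semilocally simply connected if every point has a relatively inessential
open neighbourhood. -/
def SemilocSimplyConnected (X : Type*) [TopologicalSpace X] : Prop :=
  ∀ x : X, ∃ U : Set X, IsOpen U ∧ x ∈ U ∧ RelInessential X U


/-! ### Auxiliary infrastructure -/

namespace Stmt17

open Set TopologicalSpace CategoryTheory

attribute [local instance] Path.Homotopic.setoid

instance : ContractibleSpace I := (convex_Icc (0:ℝ) 1).contractibleSpace ⟨0, by norm_num⟩

/-- The homotopy class of a path, as a morphism in the fundamental groupoid. -/
def hm {x y : X} (p : Path x y) : FundamentalGroupoid.mk x ⟶ FundamentalGroupoid.mk y := ⟦p⟧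

lemma hm_trans {x y z : X} (p : Path x y) (q : Path y z) : hm (p.trans q) = hm p ≫ hm q :=
  rfl

lemma hm_symm {x y : X} (p : Path x y) : hm p.symm = Groupoid.inv (hm p) := rfl

lemma hm_refl (x : X) : hm (Path.refl x) = 𝟙 (FundamentalGroupoid.mk x) := rfl

lemma homotopic_iff_hm {x y : X} {p q : Path x y} : p.Homotopic q ↔ hm p = hm q :=
  ⟨fun h => Quotient.sound h, fun h => Quotient.exact h⟩

/-- Basic groupoid cancellation used for the rectangle lemma. -/
lemma grpd_cancel {C : Type*} [Groupoid C] {x y z w : C} (a : x ⟶ y) (Sg : y ⟶ z) (e : w ⟶ z)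
    (Sf : x ⟶ w) (H : a ≫ Sg ≫ Groupoid.inv e ≫ Groupoid.inv Sf = 𝟙 x) :
    Sg = Groupoid.inv a ≫ Sf ≫ e := by
  have h2 : a ≫ Sg ≫ Groupoid.inv e ≫ Groupoid.inv Sf
      = a ≫ (Groupoid.inv a ≫ Sf ≫ e) ≫ Groupoid.inv e ≫ Groupoid.inv Sf := by
    rw [H]; simp
  have h3 := (cancel_epi a).mp h2
  rw [← Category.assoc Sg, ← Category.assoc _ (Groupoid.inv e) (Groupoid.inv Sf),
    ← Category.assoc] at h3
  have h4 := (cancel_mono (Groupoid.inv Sf)).mp h3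
  have h5 := (cancel_mono (Groupoid.inv e)).mp h4
  simpa using h5

/-! ### Straight-line paths in `I` and path-segments of a map -/

lemma line_mem (u v t : I) : (1 - (t:ℝ)) * u + t * v ∈ I := by
  constructor
  · nlinarith [t.2.1, t.2.2, u.2.1, v.2.1]
  · nlinarith [t.2.1, t.2.2, u.2.2, v.2.2]

/-- The straight-line path in `I` from `u` to `v`. -/
def lineP (u v : I) : Path u v where
  toFun t := ⟨(1 - (t:ℝ)) * u + t * v, line_mem u v t⟩
  continuous_toFun := by
    apply Continuous.subtype_mk
    fun_prop
  source' := by ext; simp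
  target' := by ext; simp

lemma lineP_range {u v : I} (huv : u ≤ v) : range (lineP u v) ⊆ Icc u v := by
  rintro - ⟨t, rfl⟩
  have huv' : (u:ℝ) ≤ v := huv
  constructor
  · show (u:ℝ) ≤ (1 - (t:ℝ)) * u + t * v
    nlinarith [t.2.1, t.2.2]
  · show ((1 - (t:ℝ)) * u + t * v : ℝ) ≤ v
    nlinarith [t.2.1, t.2.2]

/-- The segment of `f` from time `u` to time `v`, as a path. -/
def seg (f : C(I, X)) (u v : I) : Path (f u) (f v) := (lineP u v).map f.continuous

lemma seg_range {f : C(I, X)} {u v : I} (huv : u ≤ v) : range (seg f u v) ⊆ f '' (Icc u v) := by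
  rw [seg, Path.map_coe, range_comp]
  exact image_mono (lineP_range huv)

lemma homotopic_map {u v : I} (p q : Path u v) (f : C(I, X)) :
    (p.map f.continuous).Homotopic (q.map f.continuous) :=
  (SimplyConnectedSpace.paths_homotopic p q).map f

lemma hm_seg_split (f : C(I, X)) (u v w : I) :
    hm (seg f u w) = hm (seg f u v) ≫ hm (seg f v w) := by
  rw [← hm_trans]
  apply homotopic_iff_hm.mp
  have h : (seg f u v).trans (seg f v w) = ((lineP u v).trans (lineP v w)).map f.continuous :=
    (Path.map_trans _ _ f.continuous).symm
  rw [h]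
  exact homotopic_map _ _ f

lemma hm_seg_self (f : C(I, X)) (u : I) : hm (seg f u u) = 𝟙 _ := by
  rw [← hm_refl (f u)]
  apply homotopic_iff_hm.mp
  have h : Path.refl (f u) = (Path.refl u).map f.continuous := by ext t; rfl
  rw [h]
  exact homotopic_map _ _ f

lemma hm_toPath (f : C(I, X)) : hm (toPath f) = hm (seg f 0 1) := by
  apply homotopic_iff_hm.mp
  have h : toPath f = (⟨ContinuousMap.id I, rfl, rfl⟩ : Path (0:I) 1).map f.continuous := by
    ext t; rfl
  rw [h]
  exact homotopic_map _ _ f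

/-! ### Bridging between `pRel` and `Path.Homotopic` -/

lemma pRel_iff {f g : C(I, X)} (h0 : f 0 = g 0) (h1 : f 1 = g 1) :
    pRel f g ↔ (toPath f).Homotopic ((toPath g).cast h0 h1) := Iff.rfl

lemma pRel_of_homotopic {g : C(I, X)} {p : Path (g 0) (g 1)}
    (h : (toPath g).Homotopic p) : pRel g p.toContinuousMap := h


/-! ### The rectangle lemma -/

lemma rectangle {f g : C(I, X)} {u v : I} (huv : u ≤ v) {Vs Ws : Set X}
    (hVW : Vs ⊆ Ws) (hWin : RelInessential X Ws)
    (hf : MapsTo f (Icc u v) Vs) (hg : MapsTo g (Icc u v) Vs)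
    (ηu : Path (f u) (g u)) (ηv : Path (f v) (g v))
    (hηu : range ηu ⊆ Vs) (hηv : range ηv ⊆ Vs) :
    hm (seg g u v) = Groupoid.inv (hm ηu) ≫ hm (seg f u v) ≫ hm ηv := by
  set ℓ : Path (f u) (f u) := ηu.trans ((seg g u v).trans (ηv.symm.trans (seg f u v).symm))
    with hℓ
  have hrange : range ℓ ⊆ Ws := by
    have h1 : range (seg g u v) ⊆ Vs := (seg_range huv).trans (image_subset_iff.mpr hg)
    have h2 : range (seg f u v) ⊆ Vs := (seg_range huv).trans (image_subset_iff.mpr hf)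
    rw [hℓ, Path.trans_range, Path.trans_range, Path.trans_range, Path.symm_range,
      Path.symm_range]
    exact union_subset (hηu.trans hVW) (union_subset (h1.trans hVW)
      (union_subset (hηv.trans hVW) (h2.trans hVW)))
  have h10 : ℓ.toContinuousMap 1 = ℓ.toContinuousMap 0 := by
    show ℓ 1 = ℓ 0
    rw [ℓ.target, ℓ.source]
  have hloop := hWin ℓ.toContinuousMap hrange h10
  have e0 : ℓ.toContinuousMap 0 = f u := ℓ.source
  rw [e0] at hloop
  have h2 : ℓ.Homotopic (Path.refl (f u)) := hloop
  have h3 : hm ℓ = 𝟙 (FundamentalGroupoid.mk (f u)) := homotopic_iff_hm.mp h2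
  rw [hℓ, hm_trans, hm_trans, hm_trans, hm_symm, hm_symm] at h3
  exact grpd_cancel _ _ _ _ h3

/-! ### Gluing at the endpoints -/

lemma final_glue {f g : C(I, X)} {u v : I} (hu : u = 0) (hv : v = 1)
    (η0 : Path (f u) (g u)) (ηN : Path (f v) (g v)) {A B : Set X}
    (ha : range ηN ⊆ A) (hb : range η0 ⊆ B)
    (H : hm (seg g u v) = Groupoid.inv (hm η0) ≫ hm (seg f u v) ≫ hm ηN) :
    ∃ (a : Path (f 1) (g 1)) (b : Path (g 0) (f 0)), range a ⊆ A ∧ range b ⊆ B ∧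
      (toPath g).Homotopic (b.trans ((toPath f).trans a)) := by
  subst hu; subst hv
  refine ⟨ηN, η0.symm, ha, by rwa [Path.symm_range], ?_⟩
  rw [homotopic_iff_hm, hm_trans, hm_trans, hm_symm, hm_toPath f, hm_toPath g]
  rw [H]

/-! ### The ladder lemma: nearby paths are homotopic up to small end corrections -/

lemma key_L [LocallyPathConnectedSpace X] (hX : SemilocSimplyConnected X) (f : C(I, X))
    {A B : Set X} (hA : A ∈ nhds (f 1)) (hB : B ∈ nhds (f 0)) :
    ∃ N : Set C(I, X), IsOpen N ∧ f ∈ N ∧ ∀ g ∈ N,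
      ∃ (a : Path (f 1) (g 1)) (b : Path (g 0) (f 0)),
        range a ⊆ A ∧ range b ⊆ B ∧ (toPath g).Homotopic (b.trans ((toPath f).trans a)) := by
  classical
  -- choose relatively inessential neighbourhoods
  choose W hWopen hWmem hWin using hX
  -- the path-connected refinement
  set V : I → Set X := fun s => pathComponentIn (W (f s)) (f s) with hV
  have hVopen : ∀ s, IsOpen (V s) := fun s => (hWopen (f s)).pathComponentIn _
  have hVmem : ∀ s, f s ∈ V s := fun s => mem_pathComponentIn_self (hWmem (f s))
  have hVsub : ∀ s, V s ⊆ W (f s) := fun s => pathComponentIn_subset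
  -- cover I and take a partition
  obtain ⟨t, ht0, htmono, ⟨NN, htN⟩, hsub⟩ :=
    exists_monotone_Icc_subset_open_cover_unitInterval
      (c := fun s : I => f ⁻¹' (V s)) (fun s => (hVopen s).preimage f.continuous)
      (fun s _ => mem_iUnion.mpr ⟨s, hVmem s⟩)
  choose i hi using hsub
  have htN' : t NN = 1 := htN NN le_rfl
  -- f maps each subinterval into V (i n)
  have hfmap : ∀ n, MapsTo f (Icc (t n) (t (n + 1))) (V (i n)) := fun n => hi n
  -- the endpoint-region open sets
  set A' : Set X := interior A with hA'
  set B' : Set X := interior B with hB'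
  have hA'mem : f 1 ∈ A' := mem_interior_iff_mem_nhds.mpr hA
  have hB'mem : f 0 ∈ B' := mem_interior_iff_mem_nhds.mpr hB
  -- the small sets at the cut points
  set D : ℕ → Set X := fun n => V (i (n - 1)) ∩ V (i n) ∩
    (if t n = 1 then A' else univ) ∩ (if t n = 0 then B' else univ) with hD
  have hDopen : ∀ n, IsOpen (D n) := by
    intro n
    refine (((hVopen _).inter (hVopen _)).inter ?_).inter ?_ <;> split <;>
      first | exact isOpen_interior | exact isOpen_univ
  have hfD : ∀ n, f (t n) ∈ D n := by
    intro n
    refine ⟨⟨⟨?_, ?_⟩, ?_⟩, ?_⟩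
    · rcases Nat.eq_zero_or_pos n with hn | hn
      · subst hn
        exact hi 0 ⟨le_rfl, htmono (Nat.le_succ 0)⟩
      · have : n - 1 + 1 = n := Nat.succ_pred_eq_of_pos hn
        exact hi (n-1) ⟨htmono (by omega), by rw [this]⟩
    · exact hi n ⟨le_rfl, htmono (Nat.le_succ n)⟩
    · split <;> rename_i h
      · rw [h]; exact hA'mem
      · trivial
    · split <;> rename_i h
      · rw [h]; exact hB'mem
      · trivial
  set O : ℕ → Set X := fun n => pathComponentIn (D n) (f (t n)) with hO
  have hOopen : ∀ n, IsOpen (O n) := fun n => (hDopen n).pathComponentIn _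
  have hOmem : ∀ n, f (t n) ∈ O n := fun n => mem_pathComponentIn_self (hfD n)
  have hOsub : ∀ n, O n ⊆ D n := fun n => pathComponentIn_subset
  have hOpc : ∀ n, IsPathConnected (O n) := fun n => isPathConnected_pathComponentIn (hfD n)
  -- the neighbourhood N of f
  set N : Set C(I, X) :=
    (⋂ n ∈ Finset.range NN, {g : C(I, X) | MapsTo g (Icc (t n) (t (n + 1))) (V (i n))}) ∩
    (⋂ n ∈ Finset.range (NN + 1), {g : C(I, X) | g (t n) ∈ O n}) with hN
  have hNopen : IsOpen N := by
    refine IsOpen.inter ?_ ?_ <;> refine isOpen_biInter_finset (fun n _ => ?_)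
    · exact ContinuousMap.isOpen_setOf_mapsTo (isClosed_Icc.isCompact) (hVopen _)
    · exact (hOopen n).preimage (ContinuousEvalConst.continuous_eval_const (t n))
  have hfN : f ∈ N := by
    constructor
    · exact mem_iInter₂.mpr fun n _ => hfmap n
    · exact mem_iInter₂.mpr fun n _ => hOmem n
  refine ⟨N, hNopen, hfN, ?_⟩
  intro g hg
  obtain ⟨hg1, hg2⟩ := hg
  rw [mem_iInter₂] at hg1 hg2
  -- the ladder paths
  have hηex : ∀ n, n ≤ NN → ∃ p : Path (f (t n)) (g (t n)), range p ⊆ O n := by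
    intro n hn
    have hgO : g (t n) ∈ O n := hg2 n (Finset.mem_range.mpr (Nat.lt_succ_of_le hn))
    obtain ⟨p, hp⟩ := (hOpc n).joinedIn _ (hOmem n) _ hgO
    exact ⟨p, range_subset_iff.mpr hp⟩
  choose η hη using hηex
  -- the inductive claim
  have claim : ∀ n, ∀ hn : n ≤ NN, hm (seg g (t 0) (t n)) =
      Groupoid.inv (hm (η 0 (Nat.zero_le _))) ≫ hm (seg f (t 0) (t n)) ≫ hm (η n hn) := by
    intro n
    induction n with
    | zero =>
      intro hn
      rw [hm_seg_self, hm_seg_self]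
      simp
    | succ n ih =>
      intro hn1
      have hn : n ≤ NN := Nat.le_of_succ_le hn1
      have hnN : n < NN := Nat.lt_of_succ_le hn1
      have hrect : hm (seg g (t n) (t (n + 1))) = Groupoid.inv (hm (η n hn)) ≫
          hm (seg f (t n) (t (n + 1))) ≫ hm (η (n+1) hn1) := by
        refine rectangle (htmono (Nat.le_succ n)) (hVsub (i n)) (hWin (f (i n)))
          (hfmap n) (hg1 n (Finset.mem_range.mpr hnN)) _ _ ?_ ?_
        · exact (hη n hn).trans (fun x hx => ((hOsub n) hx).1.1.2)
        · refine (hη (n+1) hn1).trans (fun x hx => ?_)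
          have := ((hOsub (n+1)) hx).1.1.1
          simpa using this
      calc hm (seg g (t 0) (t (n + 1)))
          = hm (seg g (t 0) (t n)) ≫ hm (seg g (t n) (t (n + 1))) := hm_seg_split g _ _ _
        _ = (Groupoid.inv (hm (η 0 (Nat.zero_le _))) ≫ hm (seg f (t 0) (t n)) ≫ hm (η n hn)) ≫
            (Groupoid.inv (hm (η n hn)) ≫ hm (seg f (t n) (t (n + 1))) ≫ hm (η (n+1) hn1)) := by
            rw [ih hn, hrect]
        _ = Groupoid.inv (hm (η 0 (Nat.zero_le _))) ≫
            (hm (seg f (t 0) (t n)) ≫ hm (seg f (t n) (t (n + 1)))) ≫ hm (η (n+1) hn1) := by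
            simp
        _ = Groupoid.inv (hm (η 0 (Nat.zero_le _))) ≫ hm (seg f (t 0) (t (n+1))) ≫
            hm (η (n+1) hn1) := by rw [← hm_seg_split]
  -- conclude
  refine final_glue ht0 htN' (η 0 (Nat.zero_le _)) (η NN le_rfl) ?_ ?_ (claim NN le_rfl)
  · refine (hη NN le_rfl).trans (fun x hx => ?_)
    have h1 := ((hOsub NN) hx).1.2
    rw [if_pos htN'] at h1
    exact interior_subset h1
  · refine (hη 0 (Nat.zero_le _)).trans (fun x hx => ?_)
    have h1 := ((hOsub 0) hx).2
    rw [if_pos ht0] at h1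
    exact interior_subset h1


/-! ### The reparametrization lemma -/

set_option maxHeartbeats 1000000 in
lemma key_M (γ : C(I, X)) {Wo : Set C(I, X)} (hWo : IsOpen Wo) (hγ : γ ∈ Wo) :
    ∃ A B : Set X, A ∈ nhds (γ 1) ∧ B ∈ nhds (γ 0) ∧
      ∀ (g : C(I, X)) (a : Path (γ 1) (g 1)) (b : Path (g 0) (γ 0)),
        range a ⊆ A → range b ⊆ B →
        (toPath g).Homotopic (b.trans ((toPath γ).trans a)) → ∃ ω ∈ Wo, pRel ω g := by
  classical
  have hbasis := isTopologicalBasis_of_subbasis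
    (ContinuousMap.compactOpen_eq (X := I) (Y := X))
  obtain ⟨v, hvB, hγv, hvW⟩ := hbasis.exists_subset_of_mem_open hγ hWo
  obtain ⟨T, ⟨hTfin, hTsub⟩, rfl⟩ := hvB
  have hKU : ∀ m ∈ T, ∃ K, IsCompact K ∧ ∃ U, IsOpen U ∧ {f : C(I, X) | MapsTo f K U} = m := by
    intro m hmT
    obtain ⟨K, hK, U, hU, h⟩ := hTsub hmT
    exact ⟨K, hK, U, hU, h⟩
  choose! K hKcomp U hUopen hKUeq using hKU
  have hγm : ∀ m ∈ T, MapsTo γ (K m) (U m) := by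
    intro m hmT
    have := hγv m hmT
    rw [← hKUeq m hmT] at this
    exact this
  set A : Set X := ⋂ m ∈ {m ∈ T | (1:I) ∈ K m}, U m with hA
  set B : Set X := ⋂ m ∈ {m ∈ T | (0:I) ∈ K m}, U m with hB
  have hAopen : IsOpen A := (hTfin.subset (sep_subset _ _)).isOpen_biInter
    (fun m hmT => hUopen m hmT.1)
  have hBopen : IsOpen B := (hTfin.subset (sep_subset _ _)).isOpen_biInter
    (fun m hmT => hUopen m hmT.1)
  have hAmem : γ 1 ∈ A := mem_iInter₂.mpr fun m hmT => hγm m hmT.1 hmT.2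
  have hBmem : γ 0 ∈ B := mem_iInter₂.mpr fun m hmT => hγm m hmT.1 hmT.2
  -- the margin δf m for each subbasic set
  have hδ : ∀ m ∈ T, ∃ δ, 0 < δ ∧
      ((∀ s u : I, u ∈ K m → |(s:ℝ) - u| ≤ δ → γ s ∈ U m) ∧
       ((0:I) ∉ K m → ∀ u ∈ K m, δ ≤ (u:ℝ)) ∧
       ((1:I) ∉ K m → ∀ u ∈ K m, (u:ℝ) ≤ 1 - δ)) := by
    intro m hmT
    obtain ⟨δ₁, hδ₁pos, hδ₁⟩ := (hKcomp m hmT).exists_thickening_subset_open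
      ((hUopen m hmT).preimage γ.continuous) (hγm m hmT)
    have h0 : ∃ δ₂ > 0, (0:I) ∉ K m → ∀ u ∈ K m, δ₂ ≤ (u:ℝ) := by
      by_cases h : (0:I) ∈ K m
      · exact ⟨1, one_pos, fun h' => absurd h h'⟩
      · obtain ⟨δ₂, hδ₂pos, hδ₂⟩ := Metric.isOpen_iff.mp
          (hKcomp m hmT).isClosed.isOpen_compl 0 h
        refine ⟨δ₂/2, by positivity, fun _ u hu => ?_⟩
        by_contra hlt
        push_neg at hlt
        have hmem : u ∈ Metric.ball (0:I) δ₂ := by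
          rw [Metric.mem_ball, Subtype.dist_eq, Real.dist_eq]
          simp only [Icc.coe_zero, sub_zero]
          rw [abs_of_nonneg u.2.1]
          linarith
        exact hδ₂ hmem hu
    have h1 : ∃ δ₃ > 0, (1:I) ∉ K m → ∀ u ∈ K m, (u:ℝ) ≤ 1 - δ₃ := by
      by_cases h : (1:I) ∈ K m
      · exact ⟨1, one_pos, fun h' => absurd h h'⟩
      · obtain ⟨δ₃, hδ₃pos, hδ₃⟩ := Metric.isOpen_iff.mp
          (hKcomp m hmT).isClosed.isOpen_compl 1 h
        refine ⟨δ₃/2, by positivity, fun _ u hu => ?_⟩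
        by_contra hlt
        push_neg at hlt
        have hmem : u ∈ Metric.ball (1:I) δ₃ := by
          rw [Metric.mem_ball, Subtype.dist_eq, Real.dist_eq]
          simp only [Icc.coe_one]
          rw [abs_of_nonpos (by linarith [u.2.2] : (u:ℝ) - 1 ≤ 0)]
          linarith
        exact hδ₃ hmem hu
    obtain ⟨δ₂, hδ₂pos, hδ₂⟩ := h0
    obtain ⟨δ₃, hδ₃pos, hδ₃⟩ := h1
    refine ⟨min (δ₁/2) (min δ₂ δ₃), by positivity, ?_, ?_, ?_⟩
    · intro s u hu habs
      have hmem : s ∈ Metric.thickening δ₁ (K m) := by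
        rw [Metric.mem_thickening_iff]
        refine ⟨u, hu, ?_⟩
        rw [Subtype.dist_eq, Real.dist_eq]
        have h2 : min (δ₁/2) (min δ₂ δ₃) ≤ δ₁/2 := min_le_left _ _
        linarith [habs.trans h2]
      exact hδ₁ hmem
    · intro h u hu
      exact le_trans (le_trans (min_le_right _ _) (min_le_left _ _)) (hδ₂ h u hu)
    · intro h u hu
      have := hδ₃ h u hu
      have h2 : min (δ₁/2) (min δ₂ δ₃) ≤ δ₃ := le_trans (min_le_right _ _) (min_le_right _ _)
      linarith
  choose! δf hδpos hδP using hδ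
  -- a single global margin
  obtain ⟨d, hdpos, hdle⟩ : ∃ d, 0 < d ∧ ∀ m ∈ T, d ≤ δf m := by
    rcases T.eq_empty_or_nonempty with rfl | hTne
    · exact ⟨1, one_pos, by simp⟩
    · have hFsne : (hTfin.toFinset.image δf).Nonempty :=
        (hTfin.toFinset_nonempty.mpr hTne).image _
      refine ⟨(hTfin.toFinset.image δf).min' hFsne, ?_, ?_⟩
      · obtain ⟨m, hm, hme⟩ := Finset.mem_image.mp (Finset.min'_mem _ hFsne)
        exact hme ▸ hδpos m (hTfin.mem_toFinset.mp hm)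
      · exact fun m hmT => Finset.min'_le _ _
          (Finset.mem_image_of_mem _ (hTfin.mem_toFinset.mpr hmT))
  set ε : ℝ := min d 2 / 8 with hεdef
  have hε : 0 < ε := by rw [hεdef]; positivity
  have hε4 : ε ≤ 1/4 := by
    rw [hεdef]
    have : min d 2 ≤ 2 := min_le_right _ _
    linarith
  have h4ε : ∀ m ∈ T, 4 * ε ≤ δf m := by
    intro m hmT
    have h1 := hdle m hmT
    have h2 : min d 2 ≤ d := min_le_left _ _
    rw [hεdef]; linarith
  -- the reparametrizing map φ
  set φr : ℝ → ℝ := fun s =>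
    max (min (s / (2*ε)) (1/2 + s/4)) (3/4 + (s - (1-ε))/(4*ε)) with hφr
  have e2 : (0:ℝ) < 2*ε := by positivity
  have e4 : (0:ℝ) < 4*ε := by positivity
  have hφr01 : ∀ s : I, φr (s:ℝ) ∈ Icc (0:ℝ) 1 := by
    intro s
    have hs0 : (0:ℝ) ≤ s := s.2.1
    have hs1 : (s:ℝ) ≤ 1 := s.2.2
    have hq3 : ((s:ℝ) - (1-ε))/(4*ε) * (4*ε) = (s:ℝ) - (1-ε) := div_mul_cancel₀ _ e4.ne'
    constructor
    · simp only [hφr]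
      refine le_trans ?_ (le_max_left _ _)
      exact le_min (by positivity) (by linarith)
    · simp only [hφr]
      refine max_le ((min_le_right _ _).trans (by linarith)) ?_
      nlinarith [hq3]
  set φ : I → I := fun s => Set.projIcc 0 1 zero_le_one (φr (s:ℝ)) with hφdef
  have hφcoe : ∀ s : I, (φ s : ℝ) = φr (s:ℝ) := by
    intro s
    rw [hφdef]
    simp only
    rw [Set.projIcc_of_mem _ (hφr01 s)]
  have hφrc : Continuous φr := by
    simp only [hφr]
    exact Continuous.max (Continuous.min (by fun_prop) (by fun_prop)) (by fun_prop)
  have hφcont : Continuous φ := continuous_projIcc.comp (hφrc.comp continuous_subtype_val)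
  have hφ0 : φ 0 = 0 := by
    have hq3 : ((0:ℝ) - (1-ε))/(4*ε) * (4*ε) = (0:ℝ) - (1-ε) := div_mul_cancel₀ _ e4.ne'
    have h01 : φr 0 = 0 := by
      simp only [hφr, zero_div]
      rw [min_eq_left (by norm_num), max_eq_left (by nlinarith [hq3])]
    apply Subtype.ext
    rw [hφcoe 0]
    simpa using h01
  have hφ1 : φ 1 = 1 := by
    have h11 : φr 1 = 1 := by
      simp only [hφr]
      have h1 : ((1:ℝ) - (1-ε))/(4*ε) = 1/4 := by
        rw [div_eq_iff e4.ne']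
        ring
      rw [h1]
      rw [max_eq_right]
      · norm_num
      · refine (min_le_right _ _).trans (by norm_num)
    apply Subtype.ext
    rw [hφcoe 1]
    simpa using h11
  refine ⟨A, B, hAopen.mem_nhds hAmem, hBopen.mem_nhds hBmem, ?_⟩
  intro g a b hrga hrgb hhom
  set Pth : Path (g 0) (g 1) := b.trans ((toPath γ).trans a) with hPth
  set ω : Path (g 0) (g 1) := Pth.reparam φ hφcont hφ0 hφ1 with hω
  -- evaluation of ω
  have heval : ∀ s : I, (ω s ∈ range b ∧ (s:ℝ) ≤ 2*ε) ∨
      (ω s ∈ range a ∧ 1 - 2*ε ≤ (s:ℝ)) ∨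
      (∃ u : I, ω s = γ u ∧ |(u:ℝ) - (s:ℝ)| ≤ 2*ε) := by
    intro s
    have hs0 : (0:ℝ) ≤ s := s.2.1
    have hs1 : (s:ℝ) ≤ 1 := s.2.2
    have hq1 : (s:ℝ)/(2*ε) * (2*ε) = (s:ℝ) := div_mul_cancel₀ _ e2.ne'
    have hq3 : ((s:ℝ) - (1-ε))/(4*ε) * (4*ε) = (s:ℝ) - (1-ε) := div_mul_cancel₀ _ e4.ne'
    have hval : ω s = Pth (φ s) := rfl
    have hc : (φ s : ℝ) = φr (s:ℝ) := hφcoe s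
    have hminle : min ((s:ℝ) / (2*ε)) (1/2 + (s:ℝ)/4) ≤ φr (s:ℝ) := by
      simp only [hφr]; exact le_max_left _ _
    rw [hPth, Path.trans_apply] at hval
    split_ifs at hval with h1
    · -- b branch
      left
      refine ⟨⟨_, hval.symm⟩, ?_⟩
      rw [hc] at h1
      by_contra hs
      push_neg at hs
      have hq1big : 1/2 < (s:ℝ)/(2*ε) := by nlinarith [hq1]
      have hlmbig : 1/2 < 1/2 + (s:ℝ)/4 := by nlinarith
      have := lt_min hq1big hlmbig
      linarith [this.trans_le hminle]
    · rw [Path.trans_apply] at hval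
      push_neg at h1
      rw [hc] at h1
      split_ifs at hval with h2
      · -- γ branch
        right; right
        refine ⟨_, hval, ?_⟩
        show |2*(2*(φ s : ℝ) - 1) - (s:ℝ)| ≤ 2*ε
        rw [hc]
        simp only [Subtype.coe_mk] at h2
        rw [hc] at h2
        have hcle : φr (s:ℝ) ≤ 3/4 := by linarith
        rcases max_cases (min ((s:ℝ) / (2*ε)) (1/2 + (s:ℝ)/4))
            (3/4 + ((s:ℝ) - (1-ε))/(4*ε)) with ⟨hceq, hge⟩ | ⟨hceq, hlt⟩
        · rcases min_cases ((s:ℝ) / (2*ε)) (1/2 + (s:ℝ)/4) with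
            ⟨hmeq, hmle⟩ | ⟨hmeq, hmlt⟩
          · -- φr = l1
            simp only [hφr] at h1 hcle ⊢
            rw [hceq, hmeq] at h1 hcle ⊢
            rw [abs_le]
            constructor
            · nlinarith [hq1, mul_le_mul_of_nonneg_left hcle e2.le]
            · nlinarith [hq1]
          · -- φr = lm : exact tracking
            simp only [hφr]
            rw [hceq, hmeq]
            have : 2*(2*(1/2 + (s:ℝ)/4) - 1) - (s:ℝ) = 0 := by ring
            rw [this, abs_zero]
            positivity
        · -- φr = l3
          simp only [hφr] at h1 hcle ⊢
          rw [hceq] at h1 hcle ⊢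
          rcases le_total ((s:ℝ) / (2*ε)) (1/2 + (s:ℝ)/4) with hcase | hcase
          · -- min = l1 : impossible
            exfalso
            have h5 : (s:ℝ) ≤ ε + ε*(s:ℝ)/2 := by
              nlinarith [mul_le_mul_of_nonneg_right hcase e2.le, hq1]
            have h6 : 1 - 2*ε < (s:ℝ) := by nlinarith [hq3]
            nlinarith [h5, h6, mul_le_mul_of_nonneg_right hε4 hs0]
          · -- min = lm
            have hmin : min ((s:ℝ) / (2*ε)) (1/2 + (s:ℝ)/4) = 1/2 + (s:ℝ)/4 :=
              min_eq_right hcase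
            rw [hmin] at hlt
            have hq0 : ((s:ℝ) - (1-ε))/(4*ε) ≤ 0 := by linarith
            have hpr : ((s:ℝ) - (1-ε))/(4*ε) * (1 - ε) ≤ 0 :=
              mul_nonpos_of_nonpos_of_nonneg hq0 (by linarith)
            rw [abs_le]
            constructor
            · linarith
            · nlinarith [hq3, hpr]
      · -- a branch
        right; left
        refine ⟨⟨_, hval.symm⟩, ?_⟩
        push_neg at h2
        simp only [Subtype.coe_mk] at h2
        rw [hc] at h2
        have hc3 : 3/4 < φr (s:ℝ) := by linarith
        have hl3big : 3/4 < 3/4 + ((s:ℝ) - (1-ε))/(4*ε) := by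
          by_contra hle
          push_neg at hle
          have : φr (s:ℝ) ≤ 3/4 := by
            simp only [hφr]
            exact max_le ((min_le_right _ _).trans (by linarith)) hle
          linarith
        have hq0 : 0 < ((s:ℝ) - (1-ε))/(4*ε) := by linarith
        nlinarith [hq3, mul_pos hq0 e4]
  -- ω lies in the basic open set, hence in Wo
  have hωT : ω.toContinuousMap ∈ ⋂₀ T := by
    rw [mem_sInter]
    intro m hmT
    rw [← hKUeq m hmT]
    intro s hs
    rcases heval s with ⟨hb, hsle⟩ | ⟨ha, hsge⟩ | ⟨u, hu, habs⟩
    · have h0K : (0:I) ∈ K m := by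
        by_contra h0
        have h3 := (hδP m hmT).2.1 h0 s hs
        have h4 := h4ε m hmT
        linarith
      have hsub2 : range b ⊆ U m := by
        refine hrgb.trans ?_
        rw [hB]
        exact biInter_subset_of_mem (show m ∈ {m ∈ T | (0:I) ∈ K m} from ⟨hmT, h0K⟩)
      exact hsub2 hb
    · have h1K : (1:I) ∈ K m := by
        by_contra h1
        have h3 := (hδP m hmT).2.2 h1 s hs
        have h4 := h4ε m hmT
        linarith
      have hsub2 : range a ⊆ U m := by
        refine hrga.trans ?_
        rw [hA]
        exact biInter_subset_of_mem (show m ∈ {m ∈ T | (1:I) ∈ K m} from ⟨hmT, h1K⟩)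
      exact hsub2 ha
    · show ω s ∈ U m
      rw [hu]
      refine (hδP m hmT).1 u s hs ?_
      have := h4ε m hmT
      linarith [habs]
  refine ⟨ω.toContinuousMap, hvW hωT, ?_⟩
  have hPω : Pth.Homotopic ω := ⟨Path.Homotopy.reparam Pth φ hφcont hφ0 hφ1⟩
  have hgω : (toPath g).Homotopic ω := hhom.trans hPω
  exact ContinuousMap.HomotopicRel.symm (pRel_of_homotopic hgω)


/-! ### Openness of the quotient map -/

lemma cast_transfer {w x y z x' y' : X} (hx : x' = x) (hy : y' = y)
    (p : Path x y) (p' : Path x' y') (hpp' : p'.Homotopic (p.cast hx hy))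
    (a : Path y z) (b : Path w x) (q : Path w z)
    (H : q.Homotopic (b.trans (p.trans a))) :
    q.Homotopic ((b.cast rfl hx).trans (p'.trans (a.cast hy rfl))) := by
  subst hx; subst hy
  have h1 : (p.cast rfl rfl) = p := rfl
  rw [h1] at hpp'
  have h2 : (b.cast rfl rfl) = b := rfl
  have h3 : (a.cast rfl rfl) = a := rfl
  rw [h2, h3]
  refine H.trans ?_
  exact (Path.Homotopic.refl b).hcomp (hpp'.symm.hcomp (Path.Homotopic.refl a))

theorem isOpenMap_pq [LocallyPathConnectedSpace X] (hX : SemilocSimplyConnected X) :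
    IsOpenMap (pq : C(I, X) → Pi1 X) := by
  intro Wo hWo
  have hsat : IsOpen (pq ⁻¹' (pq '' Wo)) := by
    rw [isOpen_iff_forall_mem_open]
    intro δ hδ
    obtain ⟨γ, hγW, hpqeq⟩ := hδ
    have hrel : pRel γ δ := Quotient.exact hpqeq
    have h0 : γ 0 = δ 0 := hrel.endpts (by simp)
    have h1 : γ 1 = δ 1 := hrel.endpts (by simp)
    obtain ⟨A, B, hA, hB, HM⟩ := key_M γ hWo hγW
    have hA' : A ∈ nhds (δ 1) := h1 ▸ hA
    have hB' : B ∈ nhds (δ 0) := h0 ▸ hB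
    obtain ⟨N, hNopen, hδN, HL⟩ := key_L hX δ hA' hB'
    refine ⟨N, ?_, hNopen, hδN⟩
    intro g hg
    obtain ⟨a, b, hra, hrb, hhom⟩ := HL g hg
    have hγδ : (toPath γ).Homotopic ((toPath δ).cast h0 h1) := hrel
    have hhom' : (toPath g).Homotopic
        ((b.cast rfl h0).trans ((toPath γ).trans (a.cast h1 rfl))) :=
      cast_transfer h0 h1 (toPath δ) (toPath γ) hγδ a b (toPath g) hhom
    obtain ⟨ω, hωW, hωg⟩ := HM g (a.cast h1 rfl) (b.cast rfl h0) hra hrb hhom'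
    exact ⟨ω, hωW, Quotient.sound hωg⟩
  have : pq ⁻¹' (pq '' Wo) = (Quot.mk (pSetoid X).r) ⁻¹' (pq '' Wo) := rfl
  rw [this] at hsat
  exact isOpen_coinduced.mpr hsat

/-! ### Second countability transfer -/

lemma secondCountable_of_openMap {α β : Type*} [TopologicalSpace α] [TopologicalSpace β]
    [SecondCountableTopology α] {f : α → β} (hcont : Continuous f) (hopen : IsOpenMap f)
    (hsurj : Function.Surjective f) : SecondCountableTopology β := by
  refine (TopologicalSpace.isTopologicalBasis_of_isOpen_of_nhds (s := (f '' ·) '' countableBasis α)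
    ?_ ?_).secondCountableTopology ((countable_countableBasis α).image _)
  · rintro - ⟨v, hv, rfl⟩
    exact hopen v (isOpen_of_mem_countableBasis hv)
  · intro y u hyu hu
    obtain ⟨x, rfl⟩ := hsurj y
    obtain ⟨v, hv, hxv, hvu⟩ := (isBasis_countableBasis α).exists_subset_of_mem_open
      (mem_preimage.mpr hyu) (hu.preimage hcont)
    exact ⟨f '' v, mem_image_of_mem _ hv, mem_image_of_mem _ hxv, image_subset_iff.mpr hvu⟩

lemma continuous_pq : Continuous (pq : C(I, X) → Pi1 X) := continuous_quot_mk

lemma continuous_srcMap : Continuous (srcMap : Pi1 X → X) :=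
  continuous_quot_lift _ (ContinuousEvalConst.continuous_eval_const (0:I))

end Stmt17

open Stmt17

/-- For a locally path connected, semilocally simply connected `X`:
`X` is second countable iff `Π₁(X)` with the CO' topology is second countable, and these
are also equivalent to `P(X) = C(I, X)` with the compact-open topology being
second countable. -/
theorem stmt17 {X : Type*} [TopologicalSpace X] [LocallyPathConnectedSpace X]
    (hX : SemilocSimplyConnected X) :
    (SecondCountableTopology X ↔ SecondCountableTopology (Pi1 X)) ∧
      (SecondCountableTopology X ↔ SecondCountableTopology C(I, X)) := by
  have emb2 : Topology.IsEmbedding (fun x : X => (ContinuousMap.const I x : C(I, X))) :=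
    Function.LeftInverse.isEmbedding (f := fun f : C(I, X) => f 0) (fun x => rfl)
      (ContinuousEvalConst.continuous_eval_const (0:I)) ContinuousMap.continuous_const'
  have emb1 : Topology.IsEmbedding (fun x : X => pq (ContinuousMap.const I x)) :=
    Function.LeftInverse.isEmbedding (f := (srcMap : Pi1 X → X)) (fun x => rfl)
      continuous_srcMap (continuous_pq.comp ContinuousMap.continuous_const')
  constructor
  · constructor
    · intro hSC
      haveI := hSC
      haveI : SecondCountableTopology C(I, X) := inferInstance
      exact secondCountable_of_openMap continuous_pq (isOpenMap_pq hX)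
        (fun q => Quotient.exists_rep q)
    · intro hSC
      haveI := hSC
      exact emb1.isInducing.secondCountableTopology
  · constructor
    · intro hSC
      haveI := hSC
      exact inferInstance
    · intro hSC
      haveI := hSC
      exact emb2.isInducing.secondCountableTopology


end
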